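/- arXiv:1310.1312 — 2 statements merged into one kernel-verified Lean document; each statement's English description precedes it below -/
import Mathlib

section
/- For every n×n density matrix ρ, the subentropy is at most the von Neumann entropy: Q(ρ) ≤ S(ρ). -/
open MeasureTheory Matrix
open scoped ComplexOrder

/-- η(y) = −y ln y (with ln 0 = 0 in Mathlib, so 0 ln 0 = 0). -/
noncomputable def eta (y : ℝ) : ℝ := -(y * Real.log y)

/-- C_n = 1/2 + 1/3 + ⋯ + 1/n (C_1 = 0). -/
noncomputable def harmC (n : ℕ) : ℝ := ∑ k ∈ Finset.Icc 2 n, (1 : ℝ) / k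

/-- Integral of a function over the probability simplex Δ_n with respect to the
normalized uniform measure dx = (n−1)! dx_1 ⋯ dx_{n−1}, realised in the coordinates
(x_1, …, x_{n−1}), with x_n = 1 − (x_1 + ⋯ + x_{n−1}). -/
noncomputable def simplexIntegral (n : ℕ) (f : (Fin n → ℝ) → ℝ) : ℝ :=
  ((n - 1).factorial : ℝ) *
    ∫ y in {y : Fin (n - 1) → ℝ | (∀ i, 0 ≤ y i) ∧ ∑ i, y i ≤ 1},
      f (fun i => if h : (i : ℕ) < n - 1 then y ⟨(i : ℕ), h⟩ else 1 - ∑ j, y j)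

/-- Subentropy of a probability vector: F(λ) = n ∫_{Δ_n} η(λ·x) dx − C_n. -/
noncomputable def subF (n : ℕ) (lam : Fin n → ℝ) : ℝ :=
  (n : ℝ) * simplexIntegral n (fun x => eta (∑ i, lam i * x i)) - harmC n

/-- Subentropy of a (Hermitian) matrix: Q(ρ) = F(λ(ρ)), the subentropy of its
eigenvalue vector (junk value 0 for non-Hermitian matrices). -/
noncomputable def Qmat {ι : Type} [Fintype ι] [DecidableEq ι] (ρ : Matrix ι ι ℂ) : ℝ :=
  if h : ρ.IsHermitian then
    subF (Fintype.card ι) (fun k => h.eigenvalues ((Fintype.equivFin ι).symm k))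
  else 0

lemma continuous_eta : Continuous eta := Real.continuous_mul_log.neg

def Smp (m : ℕ) (r : ℝ) : Set (Fin m → ℝ) := {y | (∀ i, 0 ≤ y i) ∧ ∑ i, y i ≤ r}

def Esp (m : ℕ) (r : ℝ) : Set (ℝ × (Fin m → ℝ)) :=
  {p | 0 ≤ p.1 ∧ (∀ i, 0 ≤ p.2 i) ∧ p.1 + ∑ i, p.2 i ≤ r}

lemma isClosed_Smp (m : ℕ) (r : ℝ) : IsClosed (Smp m r) := by
  have h : Smp m r = (⋂ i, {y : Fin m → ℝ | 0 ≤ y i}) ∩ {y | ∑ i, y i ≤ r} := by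
    ext y; simp [Smp, Set.mem_iInter]
  rw [h]
  exact ((isClosed_iInter fun i => isClosed_le continuous_const (continuous_apply i))).inter
    (isClosed_le (continuous_finset_sum _ fun i _ => continuous_apply i) continuous_const)

lemma isCompact_Smp (m : ℕ) (r : ℝ) : IsCompact (Smp m r) := by
  refine IsCompact.of_isClosed_subset (isCompact_Icc (a := (0 : Fin m → ℝ)) (b := fun _ => r))
    (isClosed_Smp m r) ?_
  rintro y ⟨h0, hs⟩
  constructor
  · intro i; exact h0 i
  · intro i
    calc y i ≤ ∑ j, y j := Finset.single_le_sum (fun j _ => h0 j) (Finset.mem_univ i)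
    _ ≤ r := hs

lemma measurableSet_Smp (m : ℕ) (r : ℝ) : MeasurableSet (Smp m r) :=
  (isClosed_Smp m r).measurableSet

lemma isClosed_Esp (m : ℕ) (r : ℝ) : IsClosed (Esp m r) := by
  have h : Esp m r = ({p : ℝ × (Fin m → ℝ) | 0 ≤ p.1} ∩ ⋂ i, {p | 0 ≤ p.2 i}) ∩
      {p | p.1 + ∑ i, p.2 i ≤ r} := by
    ext p; simp [Esp, Set.mem_iInter]; tauto
  rw [h]
  have hc1 : Continuous fun p : ℝ × (Fin m → ℝ) => p.1 := continuous_fst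
  exact (((isClosed_le continuous_const hc1).inter
    (isClosed_iInter fun i => isClosed_le continuous_const ((continuous_apply i).comp continuous_snd))).inter
    (isClosed_le (hc1.add (continuous_finset_sum _ fun i _ => (continuous_apply i).comp continuous_snd)) continuous_const))

lemma isCompact_Esp (m : ℕ) (r : ℝ) : IsCompact (Esp m r) := by
  refine IsCompact.of_isClosed_subset
    ((isCompact_Icc (a := (0:ℝ)) (b := r)).prod (isCompact_Smp m r)) (isClosed_Esp m r) ?_
  rintro ⟨t, z⟩ ⟨h1, h2, h3⟩
  have hz : 0 ≤ ∑ i, z i := Finset.sum_nonneg fun i _ => h2 i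
  exact ⟨⟨h1, by linarith⟩, h2, by linarith⟩

lemma measurableSet_Esp (m : ℕ) (r : ℝ) : MeasurableSet (Esp m r) :=
  (isClosed_Esp m r).measurableSet

lemma integrableOn_Smp {m : ℕ} {r : ℝ} {f : (Fin m → ℝ) → ℝ} (hf : Continuous f) :
    IntegrableOn f (Smp m r) :=
  hf.continuousOn.integrableOn_compact (isCompact_Smp m r)

lemma integrableOn_Esp {m : ℕ} {r : ℝ} {F : ℝ × (Fin m → ℝ) → ℝ} (hF : Continuous F) :
    IntegrableOn F (Esp m r) :=
  hF.continuousOn.integrableOn_compact (isCompact_Esp m r)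

/-- Transfer a set integral over the simplex to the product space. -/
lemma transfer (m : ℕ) (r : ℝ) (i₀ : Fin (m+1)) (F : ℝ × (Fin m → ℝ) → ℝ) :
    ∫ y in Smp (m+1) r, F (y i₀, fun k => y (i₀.succAbove k))
      = ∫ p in Esp m r, F p := by
  have hmp := MeasureTheory.volume_preserving_piFinSuccAbove (fun _ : Fin (m+1) => ℝ) i₀
  have hemb := (MeasurableEquiv.piFinSuccAbove (fun _ : Fin (m+1) => ℝ) i₀).measurableEmbedding
  have hey : ∀ y : Fin (m+1) → ℝ,
      (MeasurableEquiv.piFinSuccAbove (fun _ : Fin (m+1) => ℝ) i₀) y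
        = (y i₀, fun k => y (i₀.succAbove k)) := fun _ => rfl
  have hpre : Smp (m+1) r
      = (MeasurableEquiv.piFinSuccAbove (fun _ : Fin (m+1) => ℝ) i₀) ⁻¹' (Esp m r) := by
    ext y
    simp only [Smp, Esp, Set.mem_setOf_eq, Set.mem_preimage, hey]
    rw [Fin.sum_univ_succAbove y i₀, Fin.forall_iff_succAbove (P := fun i => 0 ≤ y i) i₀]
    tauto
  rw [hpre, ← hmp.setIntegral_preimage_emb hemb]
  rfl

lemma Smp_empty {m : ℕ} {s : ℝ} (hs : s < 0) : Smp m s = ∅ := by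
  ext y
  simp only [Smp, Set.mem_setOf_eq, Set.mem_empty_iff_false, iff_false, not_and]
  intro h0 hsum
  have : (0:ℝ) ≤ ∑ i, y i := Finset.sum_nonneg fun i _ => h0 i
  linarith

lemma Esp_indicator_slice (m : ℕ) (r : ℝ) (F : ℝ × (Fin m → ℝ) → ℝ) (t : ℝ) :
    (fun z => (Esp m r).indicator F (t, z))
      = if 0 ≤ t then (Smp m (r - t)).indicator (fun z => F (t, z)) else 0 := by
  funext z
  by_cases ht : 0 ≤ t
  · rw [if_pos ht]
    have hiff : ((t, z) ∈ Esp m r) ↔ z ∈ Smp m (r - t) := by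
      simp only [Esp, Smp, Set.mem_setOf_eq]
      constructor
      · rintro ⟨-, h1, h2⟩; exact ⟨h1, by linarith⟩
      · rintro ⟨h1, h2⟩; exact ⟨ht, h1, by linarith⟩
    by_cases hz : z ∈ Smp m (r - t)
    · rw [Set.indicator_of_mem hz, Set.indicator_of_mem (hiff.mpr hz)]
    · rw [Set.indicator_of_notMem hz, Set.indicator_of_notMem (fun c => hz (hiff.mp c))]
  · rw [if_neg ht]
    have : (t, z) ∉ Esp m r := fun h => ht h.1
    rw [Set.indicator_of_notMem this]; rfl

lemma setIntegral_Esp_eq (m : ℕ) (r : ℝ) (hr : 0 ≤ r) (F : ℝ × (Fin m → ℝ) → ℝ)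
    (hF : Continuous F) :
    ∫ p in Esp m r, F p = ∫ t in (0:ℝ)..r, ∫ z in Smp m (r - t), F (t, z) := by
  have hint : Integrable ((Esp m r).indicator F) (volume : Measure (ℝ × (Fin m → ℝ))) :=
    (integrable_indicator_iff (measurableSet_Esp m r)).2 (integrableOn_Esp hF)
  rw [← integral_indicator (measurableSet_Esp m r)]
  rw [Measure.volume_eq_prod] at hint ⊢
  rw [integral_prod _ hint]
  have h1 : ∀ t : ℝ, (∫ z, (Esp m r).indicator F (t, z))
      = (Set.Icc (0:ℝ) r).indicator (fun t => ∫ z in Smp m (r - t), F (t, z)) t := by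
    intro t
    rw [show (fun z => (Esp m r).indicator F (t, z)) = _ from Esp_indicator_slice m r F t]
    by_cases ht : 0 ≤ t
    · rw [if_pos ht]
      by_cases htr : t ≤ r
      · rw [Set.indicator_of_mem (Set.mem_Icc.mpr ⟨ht, htr⟩) _, integral_indicator (measurableSet_Smp _ _)]
      · rw [Set.indicator_of_notMem (fun hc => htr (Set.mem_Icc.mp hc).2)]
        rw [integral_indicator (measurableSet_Smp _ _), Smp_empty (by linarith),
          Measure.restrict_empty, integral_zero_measure]
    · rw [if_neg ht, Set.indicator_of_notMem (fun hc => ht (Set.mem_Icc.mp hc).1)]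
      simp
  calc (∫ t, ∫ z, (Esp m r).indicator F (t, z))
      = ∫ t, (Set.Icc (0:ℝ) r).indicator (fun t => ∫ z in Smp m (r - t), F (t, z)) t := by
        exact integral_congr_ae (Filter.Eventually.of_forall h1)
    _ = ∫ t in Set.Icc (0:ℝ) r, ∫ z in Smp m (r - t), F (t, z) := by
        rw [integral_indicator measurableSet_Icc]
    _ = ∫ t in Set.Ioc (0:ℝ) r, ∫ z in Smp m (r - t), F (t, z) := by
        rw [integral_Icc_eq_integral_Ioc]
    _ = ∫ t in (0:ℝ)..r, ∫ z in Smp m (r - t), F (t, z) := by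
        rw [intervalIntegral.integral_of_le hr]

lemma transfer' (m : ℕ) (r : ℝ) (i₀ : Fin (m+1)) (F : ℝ × (Fin m → ℝ) → ℝ)
    (G : (Fin (m+1) → ℝ) → ℝ)
    (hG : ∀ y, G y = F (y i₀, fun k => y (i₀.succAbove k))) :
    ∫ y in Smp (m+1) r, G y = ∫ p in Esp m r, F p := by
  rw [show G = fun y => F (y i₀, fun k => y (i₀.succAbove k)) from funext hG]
  exact transfer m r i₀ F

lemma setIntegral_one_Smp : ∀ (m : ℕ) (r : ℝ), 0 ≤ r →
    (∫ _y in Smp m r, (1:ℝ)) = r ^ m / m.factorial := by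
  intro m
  induction m with
  | zero =>
    intro r hr
    have huniv : Smp 0 r = Set.univ := by
      ext y
      simp [Smp, hr]
    have hv : (volume : Measure (Fin 0 → ℝ)) Set.univ = 1 := by
      simp [MeasureTheory.volume_pi, Measure.pi_univ]
    rw [huniv, Measure.restrict_univ, integral_const, measureReal_def, hv]
    simp
  | succ m ih =>
    intro r hr
    rw [transfer' m r 0 (fun _ => (1:ℝ)) _ (fun y => rfl),
      setIntegral_Esp_eq m r hr _ continuous_const]
    have hcong : ∀ t ∈ Set.uIcc (0:ℝ) r,
        (∫ _z in Smp m (r - t), (1:ℝ)) = (r - t) ^ m / m.factorial := by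
      intro t ht
      rw [Set.uIcc_of_le hr] at ht
      exact ih (r - t) (by linarith [ht.2])
    rw [intervalIntegral.integral_congr hcong]
    rw [intervalIntegral.integral_div]
    rw [intervalIntegral.integral_comp_sub_left (fun s => s ^ m) r]
    simp only [sub_self, sub_zero, integral_pow]
    rw [Nat.factorial_succ]
    push_cast
    field_simp
    simp

lemma vol_Smp (m : ℕ) (r : ℝ) (hr : 0 ≤ r) :
    (volume (Smp m r)).toReal = r ^ m / m.factorial := by
  have h := setIntegral_one_Smp m r hr
  rw [setIntegral_const, smul_eq_mul, mul_one] at h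
  exact h

lemma marginal (m : ℕ) (i₀ : Fin (m+1)) (f : ℝ → ℝ) (hf : Continuous f) :
    ∫ y in Smp (m+1) 1, f (y i₀) = ∫ t in (0:ℝ)..1, f t * ((1 - t) ^ m / m.factorial) := by
  rw [transfer' m 1 i₀ (fun p => f p.1) _ (fun y => rfl),
    setIntegral_Esp_eq m 1 zero_le_one (fun p => f p.1) (by fun_prop)]
  apply intervalIntegral.integral_congr
  intro t ht
  rw [Set.uIcc_of_le zero_le_one] at ht
  show (∫ _z in Smp m (1 - t), f t) = f t * ((1 - t) ^ m / m.factorial)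
  rw [setIntegral_const, measureReal_def, vol_Smp m (1 - t) (by linarith [ht.2]), smul_eq_mul]
  ring

lemma Esp_indicator_slice_t {m : ℕ} {r : ℝ} {z : Fin m → ℝ} (hz : ∀ i, 0 ≤ z i)
    (F : ℝ × (Fin m → ℝ) → ℝ) :
    (fun t => (Esp m r).indicator F (t, z))
      = (Set.Icc (0:ℝ) (r - ∑ i, z i)).indicator (fun t => F (t, z)) := by
  funext t
  have hiff : ((t, z) ∈ Esp m r) ↔ t ∈ Set.Icc (0:ℝ) (r - ∑ i, z i) := by
    simp only [Esp, Set.mem_setOf_eq, Set.mem_Icc]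
    constructor
    · rintro ⟨h1, -, h3⟩; exact ⟨h1, by linarith⟩
    · rintro ⟨h1, h2⟩; exact ⟨h1, hz, by linarith⟩
  by_cases hm : t ∈ Set.Icc (0:ℝ) (r - ∑ i, z i)
  · rw [Set.indicator_of_mem hm, Set.indicator_of_mem (hiff.mpr hm)]
  · rw [Set.indicator_of_notMem hm, Set.indicator_of_notMem (fun c => hm (hiff.mp c))]

lemma reflect (m : ℕ) (f : ℝ → ℝ) (hf : Continuous f) :
    ∫ y in Smp (m+1) 1, f (1 - ∑ i, y i) = ∫ y in Smp (m+1) 1, f (y 0) := by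
  have hsum : ∀ y : Fin (m+1) → ℝ, f (1 - ∑ i, y i)
      = (fun p : ℝ × (Fin m → ℝ) => f (1 - p.1 - ∑ i, p.2 i)) (y 0, fun k => y ((0:Fin (m+1)).succAbove k)) := by
    intro y
    simp only []
    rw [Fin.sum_univ_succAbove y 0, sub_sub]
  rw [transfer' m 1 0 (fun p => f (1 - p.1 - ∑ i, p.2 i)) _ hsum,
      transfer' m 1 0 (fun p => f p.1) _ (fun y => rfl)]
  have hF1 : Continuous fun p : ℝ × (Fin m → ℝ) => f (1 - p.1 - ∑ i, p.2 i) := by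
    apply hf.comp
    exact (continuous_const.sub continuous_fst).sub
      (continuous_finset_sum _ fun i _ => (continuous_apply i).comp continuous_snd)
  have hF2 : Continuous fun p : ℝ × (Fin m → ℝ) => f p.1 := hf.comp continuous_fst
  have hint1 : Integrable ((Esp m 1).indicator fun p : ℝ × (Fin m → ℝ) => f (1 - p.1 - ∑ i, p.2 i))
      (volume : Measure (ℝ × (Fin m → ℝ))) :=
    (integrable_indicator_iff (measurableSet_Esp m 1)).2 (integrableOn_Esp hF1)
  have hint2 : Integrable ((Esp m 1).indicator fun p : ℝ × (Fin m → ℝ) => f p.1)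
      (volume : Measure (ℝ × (Fin m → ℝ))) :=
    (integrable_indicator_iff (measurableSet_Esp m 1)).2 (integrableOn_Esp hF2)
  rw [← integral_indicator (measurableSet_Esp m 1), ← integral_indicator (measurableSet_Esp m 1)]
  rw [Measure.volume_eq_prod] at hint1 hint2 ⊢
  rw [integral_prod_symm _ hint1, integral_prod_symm _ hint2]
  refine integral_congr_ae (Filter.Eventually.of_forall fun z => ?_)
  show (∫ t : ℝ, (Esp m 1).indicator (fun p : ℝ × (Fin m → ℝ) => f (1 - p.1 - ∑ i, p.2 i)) (t, z))
      = ∫ t : ℝ, (Esp m 1).indicator (fun p : ℝ × (Fin m → ℝ) => f p.1) (t, z)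
  by_cases hz : ∀ i, 0 ≤ z i
  · rw [show (fun t => (Esp m 1).indicator (fun p : ℝ × (Fin m → ℝ) => f (1 - p.1 - ∑ i, p.2 i)) (t, z)) = _ from Esp_indicator_slice_t hz _,
       show (fun t => (Esp m 1).indicator (fun p : ℝ × (Fin m → ℝ) => f p.1) (t, z)) = _ from Esp_indicator_slice_t hz _]
    rw [integral_indicator measurableSet_Icc, integral_indicator measurableSet_Icc]
    set c : ℝ := 1 - ∑ i, z i with hc
    by_cases hc0 : 0 ≤ c
    · rw [integral_Icc_eq_integral_Ioc, integral_Icc_eq_integral_Ioc,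
        ← intervalIntegral.integral_of_le hc0, ← intervalIntegral.integral_of_le hc0]
      have : ∀ t, 1 - t - ∑ i, z i = c - t := by intro t; rw [hc]; ring
      simp_rw [this]
      rw [intervalIntegral.integral_comp_sub_left f c]
      rw [sub_self, sub_zero]
    · rw [Set.Icc_eq_empty (fun h => hc0 (le_of_lt (lt_of_le_of_lt (le_refl _) (lt_of_not_ge (fun _ => hc0 h))))), Measure.restrict_empty, integral_zero_measure, integral_zero_measure]
  · push_neg at hz
    obtain ⟨i, hi⟩ := hz
    have hnot : ∀ t : ℝ, (t, z) ∉ Esp m 1 := fun t h => absurd (h.2.1 i) (not_le.mpr hi)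
    simp_rw [Set.indicator_of_notMem (hnot _)]

noncomputable def Hsum (p : ℕ) : ℝ := ∑ i ∈ Finset.range p, (1:ℝ)/(i+1)

lemma intB (k : ℕ) : ∫ t in (0:ℝ)..1, t * (1-t)^k = 1/((k+1)*(k+2)) := by
  have h := intervalIntegral.integral_comp_sub_left (fun x : ℝ => (1-x)*x^k) 1 (a := 0) (b := 1)
  simp only [sub_self, sub_zero] at h
  have h2 : ∀ t : ℝ, (1-(1-t))*(1-t)^k = t * (1-t)^k := by intro t; ring_nf
  simp_rw [h2] at h
  rw [h]
  have h3 : ∀ x : ℝ, (1-x)*x^k = x^k - x^(k+1) := by intro x; ring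
  simp_rw [h3]
  rw [intervalIntegral.integral_sub (intervalIntegral.intervalIntegrable_pow k)
    (intervalIntegral.intervalIntegrable_pow (k+1)), integral_pow, integral_pow]
  have e1 : ((k:ℝ)+1) ≠ 0 := by positivity
  have e2 : ((k:ℝ)+2) ≠ 0 := by positivity
  norm_num
  push_cast
  field_simp
  ring

lemma geo (p : ℕ) (t : ℝ) : t * ∑ i ∈ Finset.range p, (1-t)^i = 1 - (1-t)^p := by
  have h := geom_sum_mul (1-t) p
  linear_combination -h

lemma intEta (k : ℕ) : ∫ t in (0:ℝ)..1, eta t * (1-t)^k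
    = Hsum (k+1)/(k+1) - Hsum (k+2)/(k+2) := by
  set q : ℝ → ℝ := fun t => (∑ i ∈ Finset.range (k+1), (1-t)^i)/(k+1)
      - (∑ i ∈ Finset.range (k+2), (1-t)^i)/(k+2) with hq
  set Qc : ℝ → ℝ := fun t => (1 - (1-t)^(k+1))/(k+1) - (1 - (1-t)^(k+2))/(k+2) with hQc
  set R : ℝ → ℝ := fun t => (∑ i ∈ Finset.range (k+1), -((1-t)^(i+1))/(i+1))/(k+1)
      - (∑ i ∈ Finset.range (k+2), -((1-t)^(i+1))/(i+1))/(k+2) with hR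
  set G : ℝ → ℝ := fun t => -(Real.log t * Qc t) + R t with hG
  have hk1 : ((k:ℝ)+1) ≠ 0 := by positivity
  have hk2 : ((k:ℝ)+2) ≠ 0 := by positivity
  have f1 : ∀ t : ℝ, t * q t = Qc t := by
    intro t
    rw [hq, hQc]
    simp only []
    rw [← geo (k+1) t, ← geo (k+2) t]
    ring
  have hcontG : ContinuousOn G (Set.Icc 0 1) := by
    have hG2 : G = fun t => -((t * Real.log t) * q t) + R t := by
      funext t
      rw [hG]
      simp only []
      rw [← f1 t]
      ring
    rw [hG2]
    apply ContinuousOn.add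
    · apply ContinuousOn.neg
      apply ContinuousOn.mul
      · exact Real.continuous_mul_log.continuousOn
      · apply ContinuousOn.sub <;>
        · apply ContinuousOn.div_const
          apply continuousOn_finset_sum
          intro i _
          exact ((continuous_const.sub continuous_id).pow i).continuousOn
    · apply ContinuousOn.sub <;>
      · apply ContinuousOn.div_const
        apply continuousOn_finset_sum
        intro i _
        exact (((continuous_const.sub continuous_id).pow (i+1)).continuousOn).neg.div_const _
  have hderiv : ∀ t ∈ Set.Ioo (0:ℝ) 1, HasDerivAt G (eta t * (1-t)^k) t := by
    intro t ht
    have ht0 : t ≠ 0 := ne_of_gt ht.1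
    have hu : HasDerivAt (fun t : ℝ => 1 - t) (-1) t := (hasDerivAt_id t).const_sub 1
    have hQcd : HasDerivAt Qc ((1-t)^k - (1-t)^(k+1)) t := by
      have h1 : HasDerivAt (fun t : ℝ => (1 - (1-t)^(k+1))/(k+1))
          ((1-t)^k) t := by
        have := ((hu.pow (k+1)).const_sub 1).div_const ((k:ℝ)+1)
        refine this.congr_deriv ?_
        push_cast [Nat.add_sub_cancel]
        field_simp
      have h2 : HasDerivAt (fun t : ℝ => (1 - (1-t)^(k+2))/(k+2))
          ((1-t)^(k+1)) t := by
        have := ((hu.pow (k+2)).const_sub 1).div_const ((k:ℝ)+2)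
        refine this.congr_deriv ?_
        push_cast [show k+2-1 = k+1 from rfl]
        field_simp
      exact h1.sub h2
    have hRd : HasDerivAt R (q t) t := by
      have hterm : ∀ i : ℕ, HasDerivAt (fun t : ℝ => -((1-t)^(i+1))/(i+1)) ((1-t)^i) t := by
        intro i
        have := ((hu.pow (i+1)).neg).div_const ((i:ℝ)+1)
        refine this.congr_deriv ?_
        push_cast [Nat.add_sub_cancel]
        field_simp
      have h1 : HasDerivAt (fun t : ℝ => (∑ i ∈ Finset.range (k+1), -((1-t)^(i+1))/(i+1)))
          (∑ i ∈ Finset.range (k+1), (1-t)^i) t := HasDerivAt.fun_sum (fun i _ => hterm i)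
      have h2 : HasDerivAt (fun t : ℝ => (∑ i ∈ Finset.range (k+2), -((1-t)^(i+1))/(i+1)))
          (∑ i ∈ Finset.range (k+2), (1-t)^i) t := HasDerivAt.fun_sum (fun i _ => hterm i)
      exact (h1.div_const _).sub (h2.div_const _)
    have hlog : HasDerivAt Real.log t⁻¹ t := Real.hasDerivAt_log ht0
    have := (((hlog.mul hQcd).neg).add hRd)
    refine this.congr_deriv ?_
    rw [← f1 t]
    rw [show t⁻¹ * (t * q t) = q t from by field_simp]
    unfold eta
    ring
  have hFTC := intervalIntegral.integral_eq_sub_of_hasDeriv_right_of_le (zero_le_one)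
    hcontG (fun t ht => (hderiv t ht).hasDerivWithinAt)
    ((continuous_eta.mul ((continuous_const.sub continuous_id).pow k)).intervalIntegrable 0 1)
  rw [hFTC]
  have hG1 : G 1 = 0 := by
    rw [hG, hR, hQc]
    norm_num
  have hkey : ∀ p : ℕ, (∑ i ∈ Finset.range p, -((1-(0:ℝ))^(i+1))/(i+1)) = -Hsum p := by
    intro p
    rw [Hsum, ← Finset.sum_neg_distrib]
    apply Finset.sum_congr rfl
    intro i _
    norm_num [neg_div]
  have hG0 : G 0 = -(Hsum (k+1)/(k+1) - Hsum (k+2)/(k+2)) := by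
    rw [hG]
    simp only []
    rw [Real.log_zero, zero_mul, neg_zero, zero_add, hR]
    simp only []
    rw [hkey, hkey]
    ring
  rw [hG1, hG0]
  ring

lemma eta_mul (a b : ℝ) : eta (a*b) = b * eta a + a * eta b := by
  unfold eta
  rcases eq_or_ne a 0 with rfl|ha
  · simp
  rcases eq_or_ne b 0 with rfl|hb
  · simp
  rw [Real.log_mul ha hb]
  ring

lemma eta_add_le (a b : ℝ) (ha : 0 ≤ a) (hb : 0 ≤ b) : eta (a+b) ≤ eta a + eta b := by
  unfold eta
  rcases eq_or_lt_of_le ha with rfl|ha'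
  · simp
  rcases eq_or_lt_of_le hb with rfl|hb'
  · simp
  have h1 : Real.log a ≤ Real.log (a+b) := Real.log_le_log ha' (by linarith)
  have h2 : Real.log b ≤ Real.log (a+b) := Real.log_le_log hb' (by linarith)
  nlinarith [mul_le_mul_of_nonneg_left h1 ha'.le, mul_le_mul_of_nonneg_left h2 hb'.le]

lemma eta_sum_le {ι : Type*} (s : Finset ι) (a : ι → ℝ) (ha : ∀ i ∈ s, 0 ≤ a i) :
    eta (∑ i ∈ s, a i) ≤ ∑ i ∈ s, eta (a i) := by
  induction s using Finset.cons_induction with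
  | empty => simp [eta]
  | cons i s his ih =>
    rw [Finset.sum_cons, Finset.sum_cons]
    calc eta (a i + ∑ j ∈ s, a j) ≤ eta (a i) + eta (∑ j ∈ s, a j) :=
          eta_add_le _ _ (ha i (Finset.mem_cons_self i s))
            (Finset.sum_nonneg fun j hj => ha j (Finset.mem_cons_of_mem hj))
      _ ≤ eta (a i) + ∑ j ∈ s, eta (a j) :=
          add_le_add_right (ih fun j hj => ha j (Finset.mem_cons_of_mem hj)) _


lemma Hsum_succ (p : ℕ) : Hsum (p+1) = Hsum p + 1/(p+1) := by
  rw [Hsum, Hsum, Finset.sum_range_succ]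

lemma harmC_eq : ∀ n : ℕ, 1 ≤ n → harmC n = Hsum n - 1 := by
  intro n
  induction n with
  | zero => intro h; omega
  | succ m ih =>
    intro _
    rcases Nat.eq_zero_or_pos m with h1 | h1
    · subst h1
      norm_num [harmC, Hsum]
    · have hm : 1 ≤ m := by omega
      have hstep : harmC (m+1) = harmC m + 1/(m+1) := by
        rw [harmC, harmC, Finset.sum_Icc_succ_top (by omega : 2 ≤ m+1)]
        push_cast
        ring
      rw [hstep, ih hm, Hsum_succ]
      push_cast
      ring

noncomputable def xcoord (k : ℕ) (y : Fin (k+1) → ℝ) : Fin (k+2) → ℝ :=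
  fun i => if h : (i : ℕ) < k + 2 - 1 then y ⟨(i : ℕ), h⟩ else 1 - ∑ j, y j

lemma simplexIntegral_eq (k : ℕ) (f : (Fin (k+2) → ℝ) → ℝ) :
    simplexIntegral (k+2) f = ((k+1).factorial : ℝ) * ∫ y in Smp (k+1) 1, f (xcoord k y) := rfl

lemma continuous_xcoord (k : ℕ) (i : Fin (k+2)) :
    Continuous fun y : Fin (k+1) → ℝ => xcoord k y i := by
  unfold xcoord
  by_cases h : (i:ℕ) < k + 2 - 1
  · simp only [dif_pos h]
    exact continuous_apply _
  · simp only [dif_neg h]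
    exact continuous_const.sub (continuous_finset_sum _ fun j _ => continuous_apply j)

lemma xcoord_nonneg {k : ℕ} {y : Fin (k+1) → ℝ} (hy : y ∈ Smp (k+1) 1) (i : Fin (k+2)) :
    0 ≤ xcoord k y i := by
  unfold xcoord
  by_cases h : (i:ℕ) < k + 2 - 1
  · simp only [dif_pos h]
    exact hy.1 _
  · simp only [dif_neg h]
    have := hy.2
    linarith

lemma coordA (k : ℕ) (i₀ : Fin (k+1)) :
    ∫ y in Smp (k+1) 1, y i₀ = (1/(((k:ℝ)+1)*((k:ℝ)+2)))/(k.factorial : ℝ) := by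
  refine Eq.trans (marginal k i₀ (fun t => t) continuous_id) ?_
  simp_rw [← mul_div_assoc]
  rw [intervalIntegral.integral_div, intB k]

lemma coordB (k : ℕ) (i₀ : Fin (k+1)) :
    ∫ y in Smp (k+1) 1, eta (y i₀)
      = (Hsum (k+1)/((k:ℝ)+1) - Hsum (k+2)/((k:ℝ)+2))/(k.factorial : ℝ) := by
  refine Eq.trans (marginal k i₀ eta continuous_eta) ?_
  simp_rw [← mul_div_assoc]
  rw [intervalIntegral.integral_div, intEta k]

lemma lastA (k : ℕ) :
    ∫ y in Smp (k+1) 1, (1 - ∑ j, y j) = (1/(((k:ℝ)+1)*((k:ℝ)+2)))/(k.factorial : ℝ) :=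
  Eq.trans (reflect k (fun t => t) continuous_id) (coordA k 0)

lemma lastB (k : ℕ) :
    ∫ y in Smp (k+1) 1, eta (1 - ∑ j, y j)
      = (Hsum (k+1)/((k:ℝ)+1) - Hsum (k+2)/((k:ℝ)+2))/(k.factorial : ℝ) :=
  Eq.trans (reflect k eta continuous_eta) (coordB k 0)

lemma intA (k : ℕ) (i : Fin (k+2)) :
    ∫ y in Smp (k+1) 1, xcoord k y i = (1/(((k:ℝ)+1)*((k:ℝ)+2)))/(k.factorial : ℝ) := by
  by_cases hi : (i:ℕ) < k + 2 - 1
  · have h : (fun y : Fin (k+1) → ℝ => xcoord k y i) = fun y => y ⟨(i:ℕ), hi⟩ := by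
      funext y; exact dif_pos hi
    rw [h]; exact coordA k _
  · have h : (fun y : Fin (k+1) → ℝ => xcoord k y i) = fun y => 1 - ∑ j, y j := by
      funext y; exact dif_neg hi
    rw [h]; exact lastA k

lemma intB2 (k : ℕ) (i : Fin (k+2)) :
    ∫ y in Smp (k+1) 1, eta (xcoord k y i)
      = (Hsum (k+1)/((k:ℝ)+1) - Hsum (k+2)/((k:ℝ)+2))/(k.factorial : ℝ) := by
  by_cases hi : (i:ℕ) < k + 2 - 1
  · have h : (fun y : Fin (k+1) → ℝ => eta (xcoord k y i)) = fun y => eta (y ⟨(i:ℕ), hi⟩) := by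
      funext y; rw [show xcoord k y i = y ⟨(i:ℕ), hi⟩ from dif_pos hi]
    rw [h]; exact coordB k _
  · have h : (fun y : Fin (k+1) → ℝ => eta (xcoord k y i)) = fun y => eta (1 - ∑ j, y j) := by
      funext y; rw [show xcoord k y i = 1 - ∑ j, y j from dif_neg hi]
    rw [h]; exact lastB k

lemma subF_le (N : ℕ) (lam : Fin N → ℝ) (h0 : ∀ i, 0 ≤ lam i) (h1 : ∑ i, lam i = 1) :
    subF N lam ≤ ∑ i, eta (lam i) := by
  obtain _ | N := N
  · simp at h1
  obtain _ | k := N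
  · -- N = 1
    have hl0 : lam 0 = 1 := by simpa using h1
    have hSI : simplexIntegral 1 (fun x => eta (∑ i, lam i * x i)) = 0 := by
      rw [simplexIntegral]
      have : (fun y : Fin 0 → ℝ =>
          eta (∑ i : Fin 1, lam i * (fun i : Fin 1 =>
            if h : (i : ℕ) < 1 - 1 then y ⟨(i : ℕ), h⟩ else 1 - ∑ j, y j) i)) = fun _ => 0 := by
        funext y
        simp [Fin.sum_univ_one, hl0, eta]
      rw [show (∫ y in {y : Fin (1-1) → ℝ | (∀ i, 0 ≤ y i) ∧ ∑ i, y i ≤ 1},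
          (fun x => eta (∑ i, lam i * x i)) (fun i => if h : (i : ℕ) < 1 - 1 then y ⟨(i : ℕ), h⟩ else 1 - ∑ j, y j))
          = ∫ _y in {y : Fin (1-1) → ℝ | (∀ i, 0 ≤ y i) ∧ ∑ i, y i ≤ 1}, (0:ℝ) from by rw [this]]
      simp
    rw [subF, hSI]
    have : harmC 1 = 0 := by norm_num [harmC]
    rw [this]
    have hval0 : ∀ i : Fin (0+1), eta (lam i) = 0 := by
      intro i
      have hi : i = 0 := Fin.fin_one_eq_zero i
      rw [hi, hl0]
      norm_num [eta]
    rw [Finset.sum_congr rfl fun i _ => hval0 i]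
    simp
  · -- N = k + 2
    have hSmeas := measurableSet_Smp (k+1) 1
    have hcontx : ∀ i, Continuous fun y : Fin (k+1) → ℝ => xcoord k y i := continuous_xcoord k
    set vA : ℝ := (1/(((k:ℝ)+1)*((k:ℝ)+2)))/(k.factorial : ℝ) with hvA
    set vB : ℝ := (Hsum (k+1)/((k:ℝ)+1) - Hsum (k+2)/((k:ℝ)+2))/(k.factorial : ℝ) with hvB
    have hcont1 : Continuous fun y : Fin (k+1) → ℝ => eta (∑ i, lam i * xcoord k y i) :=
      continuous_eta.comp (continuous_finset_sum _ fun i _ => continuous_const.mul (hcontx i))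
    have hcont2i : ∀ i : Fin (k+2), Continuous fun y : Fin (k+1) → ℝ =>
        xcoord k y i * eta (lam i) + lam i * eta (xcoord k y i) := fun i =>
      ((hcontx i).mul continuous_const).add (continuous_const.mul (continuous_eta.comp (hcontx i)))
    have hcont2 : Continuous fun y : Fin (k+1) → ℝ =>
        ∑ i, (xcoord k y i * eta (lam i) + lam i * eta (xcoord k y i)) :=
      continuous_finset_sum _ fun i _ => hcont2i i
    have hmono : (∫ y in Smp (k+1) 1, eta (∑ i, lam i * xcoord k y i))
        ≤ ∫ y in Smp (k+1) 1, ∑ i, (xcoord k y i * eta (lam i) + lam i * eta (xcoord k y i)) := by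
      refine setIntegral_mono_on (integrableOn_Smp hcont1) (integrableOn_Smp hcont2) hSmeas ?_
      intro y hy
      calc eta (∑ i, lam i * xcoord k y i) ≤ ∑ i, eta (lam i * xcoord k y i) :=
            eta_sum_le Finset.univ _ (fun i _ => mul_nonneg (h0 i) (xcoord_nonneg hy i))
        _ = ∑ i, (xcoord k y i * eta (lam i) + lam i * eta (xcoord k y i)) :=
            Finset.sum_congr rfl fun i _ => eta_mul (lam i) (xcoord k y i)
    have hval : (∫ y in Smp (k+1) 1, ∑ i, (xcoord k y i * eta (lam i) + lam i * eta (xcoord k y i)))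
        = (∑ i, eta (lam i)) * vA + vB := by
      rw [integral_finset_sum _ (fun i _ => integrableOn_Smp (hcont2i i))]
      have hterm : ∀ i : Fin (k+2),
          (∫ y in Smp (k+1) 1, (xcoord k y i * eta (lam i) + lam i * eta (xcoord k y i)))
            = eta (lam i) * vA + lam i * vB := by
        intro i
        have hint1i : IntegrableOn (fun y => xcoord k y i * eta (lam i)) (Smp (k+1) 1) :=
          integrableOn_Smp ((hcontx i).mul continuous_const)
        have hint2i : IntegrableOn (fun y : Fin (k+1) → ℝ => lam i * eta (xcoord k y i))
            (Smp (k+1) 1) :=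
          integrableOn_Smp (continuous_const.mul (continuous_eta.comp (hcontx i)))
        rw [integral_add hint1i hint2i]
        rw [integral_mul_const, MeasureTheory.integral_const_mul, intA k i, intB2 k i, hvA, hvB]
        ring
      rw [Finset.sum_congr rfl fun i _ => hterm i]
      rw [Finset.sum_add_distrib, ← Finset.sum_mul, ← Finset.sum_mul, h1, one_mul]
    have hrepr : subF (k+2) lam = ((k+2 : ℕ) : ℝ) *
        (((k+1).factorial : ℝ) * ∫ y in Smp (k+1) 1, eta (∑ i, lam i * xcoord k y i))
          - harmC (k+2) := rfl
    rw [hrepr]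
    have hc1 : (0:ℝ) ≤ ((k+2 : ℕ) : ℝ) := by positivity
    have hc2 : (0:ℝ) ≤ ((k+1).factorial : ℝ) := by positivity
    have hstep : ((k+2 : ℕ) : ℝ) *
        (((k+1).factorial : ℝ) * ∫ y in Smp (k+1) 1, eta (∑ i, lam i * xcoord k y i))
          - harmC (k+2)
        ≤ ((k+2 : ℕ) : ℝ) * (((k+1).factorial : ℝ) * ((∑ i, eta (lam i)) * vA + vB))
          - harmC (k+2) := by
      have := mul_le_mul_of_nonneg_left (mul_le_mul_of_nonneg_left (hval ▸ hmono) hc2) hc1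
      linarith
    refine le_trans hstep (le_of_eq ?_)
    have hfac : ((k+1).factorial : ℝ) = ((k:ℝ)+1) * (k.factorial : ℝ) := by
      rw [Nat.factorial_succ]; push_cast; ring
    have hk0 : (k.factorial : ℝ) ≠ 0 := by positivity
    have hdiff : Hsum (k+2) = Hsum (k+1) + 1/((k:ℝ)+2) := by
      have := Hsum_succ (k+1)
      rw [this]; push_cast; ring
    have hC : harmC (k+2) = Hsum (k+2) - 1 := harmC_eq (k+2) (by omega)
    rw [hvA, hvB, hfac, hC, hdiff]
    push_cast
    field_simp
    ring

/-- subentropy is at most the von Neumann entropy, Q(ρ) ≤ S(ρ). -/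
theorem subentropy_le_vonNeumann_entropy (n : ℕ) (ρ : Matrix (Fin n) (Fin n) ℂ)
    (hρ : ρ.PosSemidef) (ht : ρ.trace = 1) :
    Qmat ρ ≤ ∑ i, eta (hρ.isHermitian.eigenvalues i) := by
  have hH : ρ.IsHermitian := hρ.isHermitian
  rw [Qmat, dif_pos hH]
  have htr : ∑ i, (hH.eigenvalues i : ℂ) = 1 := by
    have hst := hH.spectral_theorem
    have hU := (Matrix.mem_unitaryGroup_iff').mp (Matrix.IsHermitian.eigenvectorUnitary hH).2
    calc ∑ i, (hH.eigenvalues i : ℂ)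
        = (Matrix.diagonal ((↑) ∘ hH.eigenvalues) : Matrix (Fin n) (Fin n) ℂ).trace := by
          simp [Matrix.trace_diagonal]
      _ = ρ.trace := by
          conv_rhs => rw [hst]
          rw [Unitary.conjStarAlgAut_apply, Matrix.trace_mul_cycle, hU, one_mul]
          rfl
      _ = 1 := ht
  have hsum : ∑ i, hH.eigenvalues i = 1 := by
    have : ((∑ i, hH.eigenvalues i : ℝ) : ℂ) = 1 := by push_cast [← htr]; norm_num
    exact_mod_cast this
  set e := Fintype.equivFin (Fin n)
  have hre : ∑ kk, hH.eigenvalues (e.symm kk) = 1 := by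
    rw [Equiv.sum_comp e.symm (fun i => hH.eigenvalues i)]
    exact hsum
  have hrhs : ∑ i, eta (hH.eigenvalues i) = ∑ kk, eta (hH.eigenvalues (e.symm kk)) :=
    (Equiv.sum_comp e.symm fun i => eta (hH.eigenvalues i)).symm
  rw [hrhs]
  exact subF_le _ _ (fun kk => hρ.eigenvalues_nonneg _) hre
end

section
/- The subentropy function F is strictly concave on the probability simplex: for all λ, μ ∈ Δ_n with λ ≠ μ and all t ∈ (0,1), F(tλ + (1−t)μ) > t F(λ) + (1−t) F(μ). -/
open MeasureTheory Matrix
open scoped ComplexOrder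

lemma eta_eq_negMulLog : eta = Real.negMulLog := by
  funext y; simp [eta, Real.negMulLog, neg_mul]

/-- the subentropy function F is strictly concave on the probability simplex. -/
theorem subF_strictConcave (n : ℕ) (lam mu : Fin n → ℝ)
    (hlam : lam ∈ stdSimplex ℝ (Fin n)) (hmu : mu ∈ stdSimplex ℝ (Fin n))
    (hne : lam ≠ mu) (t : ℝ) (ht0 : 0 < t) (ht1 : t < 1) :
    t * subF n lam + (1 - t) * subF n mu < subF n (t • lam + (1 - t) • mu) := by
  rcases lt_or_ge n 2 with hn | hn
  · interval_cases n
    · exact absurd hlam.2 (by simp)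
    · refine absurd (funext fun i => ?_) hne
      have h1 : lam 0 = 1 := by simpa using hlam.2
      have h2 : mu 0 = 1 := by simpa using hmu.2
      have hi : i = 0 := Subsingleton.elim _ _
      rw [hi, h1, h2]
  obtain ⟨m, rfl⟩ : ∃ m, n = m + 1 := ⟨n - 1, by omega⟩
  have hm : 1 ≤ m := by omega
  set ν : Fin (m + 1) → ℝ := t • lam + (1 - t) • mu with hν
  have hνs : ν ∈ stdSimplex ℝ (Fin (m + 1)) :=
    (convex_stdSimplex ℝ (Fin (m + 1))) hlam hmu ht0.le (by linarith) (by ring)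
  set S : Set (Fin m → ℝ) := {y | (∀ i, 0 ≤ y i) ∧ ∑ i, y i ≤ 1} with hS
  set X : (Fin m → ℝ) → Fin (m + 1) → ℝ :=
    fun y i => if h : (i : ℕ) < m then y ⟨(i : ℕ), h⟩ else 1 - ∑ j, y j with hX
  set A : (Fin (m + 1) → ℝ) → (Fin m → ℝ) → ℝ := fun v y => ∑ i, v i * X y i with hA
  have subF_eq : ∀ v : Fin (m + 1) → ℝ,
      subF (m + 1) v
        = ((m + 1 : ℕ) : ℝ) * ((m.factorial : ℝ) * ∫ y in S, eta (A v y)) - harmC (m + 1) :=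
    fun v => rfl
  have formulaA : ∀ (v : Fin (m + 1) → ℝ) (y : Fin m → ℝ),
      A v y = (∑ i : Fin m, v i.castSucc * y i) + v (Fin.last m) * (1 - ∑ j, y j) := by
    intro v y
    rw [hA]
    show ∑ i : Fin (m + 1), v i * X y i = _
    rw [Fin.sum_univ_castSucc]
    congr 1
    · refine Finset.sum_congr rfl fun i _ => ?_
      have hi : ((i.castSucc : Fin (m + 1)) : ℕ) < m := i.isLt
      simp [hX, hi]
    · simp [hX]
  have hA_nonneg : ∀ v ∈ stdSimplex ℝ (Fin (m + 1)), ∀ y ∈ S, 0 ≤ A v y := by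
    intro v hv y hy
    refine Finset.sum_nonneg fun i _ => mul_nonneg (hv.1 i) ?_
    by_cases h : (i : ℕ) < m
    · simpa [hX, h] using hy.1 ⟨(i : ℕ), h⟩
    · simpa [hX, h] using sub_nonneg.2 hy.2
  have hA_comb : ∀ y, A ν y = t * A lam y + (1 - t) * A mu y := by
    intro y
    simp only [hA, hν, Pi.add_apply, Pi.smul_apply, smul_eq_mul, add_mul, mul_assoc,
      Finset.sum_add_distrib, Finset.mul_sum]
  have hXcont : ∀ i, Continuous fun y : Fin m → ℝ => X y i := by
    intro i
    by_cases h : (i : ℕ) < m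
    · simpa [hX, h] using continuous_apply (⟨(i : ℕ), h⟩ : Fin m)
    · simp only [hX, h, dif_neg, not_false_iff]
      exact continuous_const.sub (continuous_finset_sum _ fun j _ => continuous_apply j)
  have hAcont : ∀ v, Continuous fun y => A v y := by
    intro v
    exact continuous_finset_sum _ fun i _ => continuous_const.mul (hXcont i)
  have hetacont : Continuous eta := by
    rw [eta_eq_negMulLog]; exact Real.continuous_negMulLog
  have hSclosed : IsClosed S := by
    rw [hS, Set.setOf_and, Set.setOf_forall]
    exact IsClosed.inter
      (isClosed_iInter fun i => isClosed_le continuous_const (continuous_apply i))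
      (isClosed_le (continuous_finset_sum _ fun j _ => continuous_apply j) continuous_const)
  have hScompact : IsCompact S := by
    refine (isCompact_Icc (a := (0 : Fin m → ℝ)) (b := 1)).of_isClosed_subset hSclosed ?_
    intro y hy
    refine Set.mem_Icc.2 ⟨fun i => hy.1 i, fun i => ?_⟩
    calc y i ≤ ∑ j, y j := Finset.single_le_sum (fun j _ => hy.1 j) (Finset.mem_univ i)
      _ ≤ 1 := hy.2
  have hInt : ∀ v : Fin (m + 1) → ℝ, IntegrableOn (fun y => eta (A v y)) S := by
    intro v
    exact ContinuousOn.integrableOn_compact hScompact (hetacont.comp (hAcont v)).continuousOn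
  -- nonnegativity of the concavity gap on S
  set g : (Fin m → ℝ) → ℝ :=
    fun y => eta (A ν y) - (t * eta (A lam y) + (1 - t) * eta (A mu y)) with hg
  have hg_nonneg : ∀ y ∈ S, 0 ≤ g y := by
    intro y hy
    have hcc := Real.concaveOn_negMulLog.2 (Set.mem_Ici.2 (hA_nonneg lam hlam y hy))
      (Set.mem_Ici.2 (hA_nonneg mu hmu y hy)) ht0.le (by linarith : (0:ℝ) ≤ 1 - t)
      (by ring : t + (1 - t) = 1)
    simp only [smul_eq_mul] at hcc
    simp only [hg, eta_eq_negMulLog, hA_comb y, sub_nonneg]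
    exact hcc
  -- existence of a coefficient difference
  have hcoef : ∃ j : Fin m,
      lam j.castSucc - mu j.castSucc ≠ lam (Fin.last m) - mu (Fin.last m) := by
    by_contra hcon
    push_neg at hcon
    have hall : ∀ i : Fin (m + 1),
        lam i - mu i = lam (Fin.last m) - mu (Fin.last m) := by
      intro i
      rcases lt_or_ge (i : ℕ) m with h | h
      · have hi : i = (⟨(i : ℕ), h⟩ : Fin m).castSucc := by ext; simp
        rw [hi]; exact hcon _
      · have hi : i = Fin.last m := by
          ext; simp only [Fin.val_last]; omega
        rw [hi]
    have hsum : ∑ i, (lam i - mu i) = 0 := by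
      rw [Finset.sum_sub_distrib, hlam.2, hmu.2, sub_self]
    rw [Finset.sum_congr rfl fun i _ => hall i, Finset.sum_const, Finset.card_univ,
      Fintype.card_fin, nsmul_eq_mul] at hsum
    have hc0 : lam (Fin.last m) - mu (Fin.last m) = 0 :=
      (mul_eq_zero.1 hsum).resolve_left (Nat.cast_ne_zero.2 (by omega))
    refine hne (funext fun i => ?_)
    have := hall i
    rw [hc0] at this
    linarith
  obtain ⟨j0, hj0⟩ := hcoef
  set δ : ℝ := 1 / (2 * (m + 1)) with hδ
  have hδpos : 0 < δ := by rw [hδ]; positivity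
  set p : Fin m → ℝ := fun _ => δ with hp
  set q : Fin m → ℝ := Function.update p j0 (δ / 2) with hq
  set T : Set (Fin m → ℝ) := {y | (∀ i, 0 < y i) ∧ ∑ i, y i < 1} with hT
  have hTopen : IsOpen T := by
    rw [hT, Set.setOf_and, Set.setOf_forall]
    exact IsOpen.inter
      (isOpen_iInter_of_finite fun i => isOpen_lt continuous_const (continuous_apply i))
      (isOpen_lt (continuous_finset_sum _ fun j _ => continuous_apply j) continuous_const)
  have hTsub : T ⊆ S := fun y hy => ⟨fun i => (hy.1 i).le, hy.2.le⟩
  have hsump : ∑ i : Fin m, p i < 1 := by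
    rw [hp]
    rw [Finset.sum_const, Finset.card_univ, Fintype.card_fin, nsmul_eq_mul, hδ,
      mul_one_div, div_lt_one (by positivity)]
    have : (0 : ℝ) ≤ (m : ℝ) := Nat.cast_nonneg m
    linarith
  have hpT : p ∈ T := ⟨fun i => hδpos, hsump⟩
  have hqle : ∀ i, q i ≤ p i := by
    intro i
    rw [hq, Function.update_apply]
    split
    · rw [hp]; linarith
    · exact le_rfl
  have hqT : q ∈ T := by
    constructor
    · intro i
      rw [hq, Function.update_apply]
      split
      · linarith
      · rw [hp]; exact hδpos
    · calc ∑ i, q i ≤ ∑ i, p i := Finset.sum_le_sum fun i _ => hqle i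
        _ < 1 := hsump
  have hpq : ∀ i, p i - q i = if i = j0 then δ / 2 else 0 := by
    intro i
    rw [hq, Function.update_apply]
    split
    · rw [hp]; ring
    · rw [sub_self]
  have hsumpq : ∑ i, p i - ∑ i, q i = δ / 2 := by
    rw [← Finset.sum_sub_distrib, Finset.sum_congr rfl fun i _ => hpq i,
      Finset.sum_ite_eq' Finset.univ j0 fun _ => δ / 2]
    simp
  have hAdiff : ∀ v : Fin (m + 1) → ℝ,
      A v p - A v q = (v j0.castSucc - v (Fin.last m)) * (δ / 2) := by
    intro v
    rw [formulaA, formulaA]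
    have e1 : ∑ i, v i.castSucc * p i - ∑ i, v i.castSucc * q i
        = v j0.castSucc * (δ / 2) := by
      rw [← Finset.sum_sub_distrib,
        Finset.sum_congr rfl fun i _ => by rw [← mul_sub, hpq i, mul_ite, mul_zero],
        Finset.sum_ite_eq' Finset.univ j0 fun i => v i.castSucc * (δ / 2)]
      simp
    linear_combination e1 - v (Fin.last m) * hsumpq
  have hz : ∃ z ∈ T, A lam z ≠ A mu z := by
    by_contra h
    push_neg at h
    have h1 := h p hpT
    have h2 := h q hqT
    have key : (lam j0.castSucc - mu j0.castSucc
        - (lam (Fin.last m) - mu (Fin.last m))) * (δ / 2) = 0 := by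
      linear_combination -hAdiff lam + hAdiff mu + h1 - h2
    rcases mul_eq_zero.1 key with hk | hk
    · exact hj0 (by linarith)
    · exact absurd hk (by positivity)
  obtain ⟨z, hzT, hzne⟩ := hz
  set U : Set (Fin m → ℝ) := T ∩ {y | A lam y ≠ A mu y} with hU
  have hUopen : IsOpen U :=
    hTopen.inter (isOpen_ne_fun (hAcont lam) (hAcont mu))
  have hUsub : U ⊆ S := fun y hy => hTsub hy.1
  have hzU : z ∈ U := ⟨hzT, hzne⟩
  have hgpos : ∀ y ∈ U, 0 < g y := by
    intro y hy
    have hyS := hUsub hy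
    have hsc := Real.strictConcaveOn_negMulLog.2 (Set.mem_Ici.2 (hA_nonneg lam hlam y hyS))
      (Set.mem_Ici.2 (hA_nonneg mu hmu y hyS)) hy.2 ht0 (by linarith : (0:ℝ) < 1 - t)
      (by ring : t + (1 - t) = 1)
    simp only [smul_eq_mul] at hsc
    simp only [hg, eta_eq_negMulLog, hA_comb y, sub_pos]
    exact hsc
  have hgInt : IntegrableOn g S := by
    rw [hg]
    exact (hInt ν).sub (((hInt lam).const_mul t).add ((hInt mu).const_mul (1 - t)))
  have hmeasS : MeasurableSet S := hSclosed.measurableSet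
  have hae : 0 ≤ᵐ[volume.restrict S] g :=
    ae_restrict_of_forall_mem hmeasS hg_nonneg
  have hpos : 0 < ∫ y in S, g y := by
    rw [integral_pos_iff_support_of_nonneg_ae hae hgInt]
    have hUsup : U ⊆ Function.support g := fun y hy => ne_of_gt (hgpos y hy)
    calc (0 : ENNReal) < volume U := hUopen.measure_pos volume ⟨z, hzU⟩
      _ = volume.restrict S U := by
          rw [Measure.restrict_apply hUopen.measurableSet, Set.inter_eq_left.2 hUsub]
      _ ≤ volume.restrict S (Function.support g) := measure_mono hUsup
  have hint_eq : ∫ y in S, g y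
      = (∫ y in S, eta (A ν y))
        - (t * (∫ y in S, eta (A lam y)) + (1 - t) * (∫ y in S, eta (A mu y))) := by
    have hI2 : IntegrableOn (fun y => t * eta (A lam y) + (1 - t) * eta (A mu y)) S := by
      exact ((hInt lam).const_mul t).add ((hInt mu).const_mul (1 - t))
    have hIa : IntegrableOn (fun y => t * eta (A lam y)) S := (hInt lam).const_mul t
    have hIb : IntegrableOn (fun y => (1 - t) * eta (A mu y)) S := (hInt mu).const_mul (1 - t)
    rw [hg, integral_sub (hInt ν) hI2, integral_add hIa hIb,
      integral_const_mul, integral_const_mul]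
  have hmain : t * (∫ y in S, eta (A lam y)) + (1 - t) * (∫ y in S, eta (A mu y))
      < ∫ y in S, eta (A ν y) := by linarith
  rw [subF_eq lam, subF_eq mu, subF_eq ν]
  have hK : (0 : ℝ) < ((m + 1 : ℕ) : ℝ) * (m.factorial : ℝ) := by positivity
  nlinarith [mul_lt_mul_of_pos_left hmain hK]
end
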